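/- Let q be a prime power, A ⊆ F_q of size n, 1 ≤ k < n, C = {(t(a))_{a∈A} : deg t ≤ k-1}, and w = (w(a))_{a∈A} for w(x) ∈ F_q[x] of degree k+d with d ≥ 1 and leading coefficient 1. Then d(w, C) ≤ n - k - 1 if and only if there exist k+1 distinct elements a₁,…,a_{k+1} ∈ A such that the remainder of w(x) upon division by ∏_{i=1}^{k+1}(x - a_i) has degree ≤ k - 1. -/

import Mathlib

open Polynomial

theorem stmt18 (Fq : Type*) [Field Fq] [Fintype Fq] [DecidableEq Fq]
    (A : Finset Fq) (n k d : ℕ) (hn : A.card = n) (hk : 1 ≤ k) (hkn : k < n)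
    (hd : 1 ≤ d) (p : Polynomial Fq) (hm : p.Monic) (hdeg : p.natDegree = k + d) :
    (∃ t : Polynomial Fq, t.degree < (k : ℕ) ∧
        hammingDist (fun a : ↥A => p.eval (a : Fq)) (fun a : ↥A => t.eval (a : Fq)) ≤
          n - k - 1) ↔
      ∃ S : Finset Fq, S ⊆ A ∧ S.card = k + 1 ∧
        (p %ₘ ∏ a ∈ S, (X - C a)).degree < (k : ℕ) := by
  constructor
  · rintro ⟨t, ht, hdist⟩
    classical
    set E : Finset ↥A := Finset.univ.filter (fun a : ↥A => p.eval (a : Fq) = t.eval (a : Fq))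
      with hE
    have hsum : E.card + (Finset.univ.filter fun a : ↥A =>
        ¬ p.eval (a : Fq) = t.eval (a : Fq)).card = Fintype.card ↥A :=
      Finset.card_filter_add_card_filter_not _
    have hcardA : Fintype.card ↥A = n := by rw [Fintype.card_coe, hn]
    have hdist' : hammingDist (fun a : ↥A => p.eval (a : Fq)) (fun a : ↥A => t.eval (a : Fq))
        = (Finset.univ.filter fun a : ↥A => ¬ p.eval (a : Fq) = t.eval (a : Fq)).card := by
      rfl
    have hE1 : k + 1 ≤ E.card := by
      rw [hdist'] at hdist; omega
    obtain ⟨E', hE'sub, hE'card⟩ := Finset.exists_subset_card_eq hE1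
    refine ⟨E'.image Subtype.val, ?_, ?_, ?_⟩
    · intro x hx
      simp only [Finset.mem_image] at hx
      obtain ⟨a, _, rfl⟩ := hx
      exact a.2
    · rw [Finset.card_image_of_injective _ Subtype.val_injective, hE'card]
    · set S := E'.image Subtype.val with hS
      set q : Polynomial Fq := ∏ a ∈ S, (X - C a) with hq
      have hqm : q.Monic := monic_prod_of_monic _ _ (fun a _ => monic_X_sub_C a)
      have hScard : S.card = k + 1 := by
        rw [hS, Finset.card_image_of_injective _ Subtype.val_injective, hE'card]
      have hqdeg : q.natDegree = k + 1 := by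
        rw [hq, natDegree_prod_of_monic _ _ (fun a _ => monic_X_sub_C a)]
        simp [natDegree_X_sub_C, hScard]
      have hpt : p - t ≠ 0 := by
        intro h
        have : p = t := sub_eq_zero.mp h
        rw [this] at hdeg
        have := t.natDegree_lt_iff_degree_lt (by
          intro h0
          rw [h0] at hdeg; simp at hdeg; omega) |>.mpr ht
        omega
      have hroots : S.val ≤ (p - t).roots := by
        rw [Multiset.le_iff_subset S.nodup]
        intro a ha
        rw [mem_roots hpt]
        have haE : p.eval a = t.eval a := by
          rw [hS] at ha
          simp only [Finset.mem_val, Finset.mem_image] at ha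
          obtain ⟨b, hb, rfl⟩ := ha
          have := hE'sub hb
          rw [hE, Finset.mem_filter] at this
          exact this.2
        simp [IsRoot, haE]
      have hdvd : q ∣ p - t := by
        rw [hq, Finset.prod_eq_multiset_prod]
        exact (Multiset.prod_X_sub_C_dvd_iff_le_roots hpt S.val).mpr hroots
      have hmod0 : (p - t) %ₘ q = 0 := (modByMonic_eq_zero_iff_dvd hqm).mpr hdvd
      have htself : t %ₘ q = t := by
        rw [modByMonic_eq_self_iff hqm]
        refine lt_of_lt_of_le ht ?_
        rw [degree_eq_natDegree hqm.ne_zero, hqdeg]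
        exact_mod_cast Nat.le_succ k
      have : p %ₘ q = t := by
        have := add_modByMonic (q := q) (p - t) t
        rw [sub_add_cancel, hmod0, zero_add, htself] at this
        exact this
      rw [this]
      exact ht
  · rintro ⟨S, hSA, hScard, hrem⟩
    classical
    set q : Polynomial Fq := ∏ a ∈ S, (X - C a) with hq
    have hqm : q.Monic := monic_prod_of_monic _ _ (fun a _ => monic_X_sub_C a)
    refine ⟨p %ₘ q, hrem, ?_⟩
    have hagree : ∀ a ∈ S, p.eval a = (p %ₘ q).eval a := by
      intro a ha
      have hq0 : q.eval a = 0 := by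
        rw [hq, eval_prod]
        exact Finset.prod_eq_zero ha (by simp)
      rw [modByMonic_eq_sub_mul_div p q, eval_sub, eval_mul, hq0, zero_mul, sub_zero]
    have hsub : (Finset.univ.filter fun a : ↥A =>
          ¬ p.eval (a : Fq) = (p %ₘ q).eval (a : Fq)) ⊆
        Finset.univ.filter fun a : ↥A => (a : Fq) ∉ S := by
      intro a ha
      simp only [Finset.mem_filter, Finset.mem_univ, true_and] at ha ⊢
      exact fun h => ha (hagree _ h)
    have himg : (Finset.univ.filter fun a : ↥A => (a : Fq) ∈ S).image Subtype.val = S := by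
      ext x
      simp only [Finset.mem_image, Finset.mem_filter, Finset.mem_univ, true_and,
        Subtype.exists, exists_and_left, exists_prop, exists_eq_right_right]
      exact ⟨fun h => h.1, fun h => ⟨h, hSA h⟩⟩
    have hcardS : (Finset.univ.filter fun a : ↥A => (a : Fq) ∈ S).card = k + 1 := by
      rw [← Finset.card_image_of_injective _ Subtype.val_injective, himg, hScard]
    have hsum : (Finset.univ.filter fun a : ↥A => (a : Fq) ∈ S).card +
        (Finset.univ.filter fun a : ↥A => (a : Fq) ∉ S).card = Fintype.card ↥A :=
      Finset.card_filter_add_card_filter_not _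
    have hcardA : Fintype.card ↥A = n := by rw [Fintype.card_coe, hn]
    have hdist' : hammingDist (fun a : ↥A => p.eval (a : Fq))
        (fun a : ↥A => (p %ₘ q).eval (a : Fq))
        = (Finset.univ.filter fun a : ↥A =>
            ¬ p.eval (a : Fq) = (p %ₘ q).eval (a : Fq)).card := rfl
    rw [hdist']
    have := Finset.card_le_card hsub
    omega
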